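/- arXiv:1404.3494 — 5 statements merged into one kernel-verified Lean document; each statement's English description precedes it below -/
import Mathlib

section
/- For each c ∈ {1, 2}, the polynomial F(n) = n² + c is recursively-factorable. -/
/-- A polynomial `F` with integer coefficients (here given by its value function) is
*recursively-factorable* if for every `n ∈ ℤ` and all integers `p, q` with `F(n) = p·q`,
`|p| ≠ 1` and `|q| ≠ 1`, there exists `r ∈ ℤ` with `|F(r)| < |F(n)|` and `r ≡ n (mod |p|)`
or `r ≡ n (mod |q|)` (congruence mod 0 meaning equality, which is exactly divisibility of
`r - n` by `p` resp. `q`). -/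
def RecursivelyFactorable (F : ℤ → ℤ) : Prop :=
  ∀ n p q : ℤ, F n = p * q → |p| ≠ 1 → |q| ≠ 1 →
    ∃ r : ℤ, |F r| < |F n| ∧ (p ∣ (r - n) ∨ q ∣ (r - n))

/-- For each `c ∈ {1, 2}`, the polynomial `F(n) = n ^ 2 + c` is
recursively-factorable. -/
theorem stmt_5 :
    ∀ c : ℤ, c ∈ ({1, 2} : Set ℤ) →
      RecursivelyFactorable (fun n : ℤ => n ^ 2 + c) := by
  intro c hc n p q hpq hp hq
  simp only [Set.mem_insert_iff, Set.mem_singleton_iff] at hc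
  have hc1 : 1 ≤ c ∧ c ≤ 2 := by rcases hc with h | h <;> omega
  simp only at hpq ⊢
  have hFpos : 0 < n ^ 2 + c := by nlinarith [sq_nonneg n]
  have hp0 : p ≠ 0 := by rintro rfl; simp at hpq; omega
  have hq0 : q ≠ 0 := by rintro rfl; simp at hpq; omega
  have h2p : 2 ≤ |p| := by have := abs_pos.mpr hp0; omega
  have h2q : 2 ≤ |q| := by have := abs_pos.mpr hq0; omega
  set m := min |p| |q| with hm
  have hm2 : 2 ≤ m := le_min h2p h2q
  have hmm : m * m ≤ n ^ 2 + c := by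
    calc m * m ≤ |p| * |q| :=
          mul_le_mul (min_le_left _ _) (min_le_right _ _) (by omega) (abs_nonneg p)
      _ = |p * q| := (abs_mul p q).symm
      _ = n ^ 2 + c := by rw [← hpq, abs_of_pos hFpos]
  have hmpos : (0 : ℤ) < m := by omega
  set r0 := n % m with hr0
  have h0 : 0 ≤ r0 := Int.emod_nonneg n hmpos.ne'
  have h1 : r0 < m := Int.emod_lt_of_pos n hmpos
  have hdvd0 : m ∣ r0 - n := ⟨-(n / m), by rw [hr0, Int.emod_def]; ring⟩
  set r : ℤ := if 2 * r0 ≤ m then r0 else r0 - m with hrdef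
  have hdvd : m ∣ r - n := by
    rw [hrdef]; split
    · exact hdvd0
    · have : r0 - m - n = (r0 - n) + m * (-1) := by ring
      rw [this]; exact dvd_add hdvd0 ⟨-1, rfl⟩
  have hbound : 4 * r ^ 2 ≤ m ^ 2 := by
    rw [hrdef]; split <;> nlinarith
  have hn2 : r ^ 2 < n ^ 2 := by nlinarith
  refine ⟨r, ?_, ?_⟩
  · have h1 : 0 ≤ r ^ 2 + c := by nlinarith [sq_nonneg r]
    rw [abs_of_nonneg h1, abs_of_pos hFpos]; omega
  · rcases min_cases |p| |q| with ⟨h, _⟩ | ⟨h, _⟩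
    · left; exact (abs_dvd p _).mp (h ▸ hdvd)
    · right; exact (abs_dvd q _).mp (h ▸ hdvd)
end

section
/- For each c ∈ {1, 2, 3, 5, 11, 17, 41}, the Euler-like polynomial F(n) = n² + n + c is recursively-factorable. -/
lemma noRoot (d : ℕ) [NeZero d] (c : ℤ)
    (h : ∀ x : ZMod d, x ^ 2 + x + (c : ZMod d) ≠ 0) (m : ℤ) :
    ¬ ((d : ℤ) ∣ m ^ 2 + m + c) := by
  intro hdvd
  have h0 := (ZMod.intCast_zmod_eq_zero_iff_dvd (m ^ 2 + m + c) d).mpr hdvd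
  push_cast at h0
  exact h m h0

lemma key (c : ℤ) (hc : 1 ≤ c)
    (hdiv : ∀ d : ℕ, 2 ≤ d → 3 * (d : ℤ) ^ 2 ≤ 4 * c - 1 → ∀ m : ℤ,
      ¬ ((d : ℤ) ∣ m ^ 2 + m + c)) :
    RecursivelyFactorable (fun n : ℤ => n ^ 2 + n + c) := by
  have hpos : ∀ n : ℤ, 0 < n ^ 2 + n + c := by
    intro n; nlinarith [sq_nonneg (2 * n + 1)]
  have step : ∀ n p q : ℤ, n ^ 2 + n + c = p * q → 2 ≤ |p| → |p| ≤ |q| →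
      ∃ r : ℤ, |r ^ 2 + r + c| < |n ^ 2 + n + c| ∧ p ∣ r - n := by
    intro n p q hpq hp2 hpqle
    have hFn : 0 < n ^ 2 + n + c := hpos n
    have hpd : p ∣ |p| := (dvd_abs p p).mpr dvd_rfl
    rcases lt_or_ge |p| |2 * n + 1| with h | h
    · rcases le_or_gt 0 n with hn | hn
      · refine ⟨n - |p|, ?_, ?_⟩
        · rw [abs_of_pos (hpos _), abs_of_pos hFn]
          have h1 : |2 * n + 1| = 2 * n + 1 := abs_of_nonneg (by linarith)
          rw [h1] at h
          nlinarith [mul_pos (show (0:ℤ) < |p| by linarith)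
            (show (0:ℤ) < 2 * n + 1 - |p| by linarith)]
        · have : n - |p| - n = -|p| := by ring
          rw [this]; exact dvd_neg.mpr hpd
      · refine ⟨n + |p|, ?_, ?_⟩
        · rw [abs_of_pos (hpos _), abs_of_pos hFn]
          have h1 : |2 * n + 1| = -(2 * n + 1) := abs_of_neg (by linarith)
          rw [h1] at h
          nlinarith [mul_pos (show (0:ℤ) < |p| by linarith)
            (show (0:ℤ) < -(2 * n + 1) - |p| by linarith)]
        · have : n + |p| - n = |p| := by ring
          rw [this]; exact hpd
    · exfalso
      have e1 : |p| * |q| = n ^ 2 + n + c := by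
        rw [← abs_mul, ← hpq, abs_of_pos hFn]
      have e2 : p ^ 2 ≤ n ^ 2 + n + c := by
        nlinarith [sq_abs p, mul_le_mul_of_nonneg_left hpqle (abs_nonneg p)]
      have h2 : (2 * n + 1) * (2 * n + 1) ≤ p * p := by
        have := mul_self_le_mul_self (abs_nonneg (2 * n + 1)) h
        rwa [abs_mul_abs_self, abs_mul_abs_self] at this
      have h3 : 3 * p ^ 2 ≤ 4 * c - 1 := by nlinarith
      have hd2 : 2 ≤ p.natAbs := by
        have := Int.natCast_natAbs p
        omega
      have hdle : 3 * ((p.natAbs : ℤ)) ^ 2 ≤ 4 * c - 1 := by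
        rw [show ((p.natAbs : ℤ)) ^ 2 = p ^ 2 by rw [Int.natCast_natAbs, sq_abs]]
        exact h3
      have hddvd : ((p.natAbs : ℤ)) ∣ n ^ 2 + n + c := by
        rw [Int.natCast_natAbs]
        exact (abs_dvd _ _).mpr ⟨q, hpq⟩
      exact hdiv p.natAbs hd2 hdle n hddvd
  intro n p q hpq hp hq
  have hpq' : n ^ 2 + n + c = p * q := hpq
  have hFn : 0 < n ^ 2 + n + c := hpos n
  have hp0 : p ≠ 0 := by rintro rfl; simp at hpq'; omega
  have hq0 : q ≠ 0 := by rintro rfl; simp at hpq'; omega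
  have hp2 : 2 ≤ |p| := by
    have h1 : 1 ≤ |p| := Int.one_le_abs (by simpa using hp0)
    rcases h1.lt_or_eq with h | h
    · omega
    · exact absurd h.symm hp
  have hq2 : 2 ≤ |q| := by
    have h1 : 1 ≤ |q| := Int.one_le_abs (by simpa using hq0)
    rcases h1.lt_or_eq with h | h
    · omega
    · exact absurd h.symm hq
  rcases le_total |p| |q| with h | h
  · obtain ⟨r, h1, h2⟩ := step n p q hpq' hp2 h
    exact ⟨r, h1, Or.inl h2⟩
  · obtain ⟨r, h1, h2⟩ := step n q p (by rw [hpq', mul_comm]) hq2 h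
    exact ⟨r, h1, Or.inr h2⟩

/-- For each `c ∈ {1, 2, 3, 5, 11, 17, 41}`, the polynomial `F(n) = n ^ 2 + n + c` is
recursively-factorable. -/
theorem stmt_6 :
    ∀ c : ℤ, c ∈ ({1, 2, 3, 5, 11, 17, 41} : Set ℤ) →
      RecursivelyFactorable (fun n : ℤ => n ^ 2 + n + c) := by
  intro c hc
  simp only [Set.mem_insert_iff, Set.mem_singleton_iff] at hc
  rcases hc with rfl | rfl | rfl | rfl | rfl | rfl | rfl
  · refine key 1 (by norm_num) ?_
    intro d hd hle m
    exfalso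
    have h2 : (2:ℤ) ≤ (d:ℤ) := by exact_mod_cast hd
    nlinarith
  · refine key 2 (by norm_num) ?_
    intro d hd hle m
    exfalso
    have h2 : (2:ℤ) ≤ (d:ℤ) := by exact_mod_cast hd
    nlinarith
  · refine key 3 (by norm_num) ?_
    intro d hd hle m
    exfalso
    have h2 : (2:ℤ) ≤ (d:ℤ) := by exact_mod_cast hd
    nlinarith
  · refine key 5 (by norm_num) ?_
    intro d hd hle m
    have hub : d ≤ 2 := by
      by_contra hh
      push_neg at hh
      have h3 : (3:ℤ) ≤ (d:ℤ) := by exact_mod_cast hh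
      nlinarith
    interval_cases d
    · exact noRoot 2 5 (by decide) m
  · refine key 11 (by norm_num) ?_
    intro d hd hle m
    have hub : d ≤ 3 := by
      by_contra hh
      push_neg at hh
      have h3 : (4:ℤ) ≤ (d:ℤ) := by exact_mod_cast hh
      nlinarith
    interval_cases d
    · exact noRoot 2 11 (by decide) m
    · exact noRoot 3 11 (by decide) m
  · refine key 17 (by norm_num) ?_
    intro d hd hle m
    have hub : d ≤ 4 := by
      by_contra hh
      push_neg at hh
      have h3 : (5:ℤ) ≤ (d:ℤ) := by exact_mod_cast hh
      nlinarith
    interval_cases d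
    · exact noRoot 2 17 (by decide) m
    · exact noRoot 3 17 (by decide) m
    · exact noRoot 4 17 (by decide) m
  · refine key 41 (by norm_num) ?_
    intro d hd hle m
    have hub : d ≤ 7 := by
      by_contra hh
      push_neg at hh
      have h3 : (8:ℤ) ≤ (d:ℤ) := by exact_mod_cast hh
      nlinarith
    interval_cases d
    · exact noRoot 2 41 (by decide) m
    · exact noRoot 3 41 (by decide) m
    · exact noRoot 4 41 (by decide) m
    · exact noRoot 5 41 (by decide) m
    · exact noRoot 6 41 (by decide) m
    · exact noRoot 7 41 (by decide) m
end

section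
/- For each c ∈ {1, 2, 3, 7, 19}, the polynomial F(n) = 2n² + 2n + c is recursively-factorable. -/
lemma exists_near (m n : ℤ) (hm : 0 < m) :
    ∃ r : ℤ, m ∣ (r - n) ∧ (2*r+1)^2 ≤ m^2 := by
  refine ⟨n - m * ((2*n+1+m) / (2*m)), ⟨-((2*n+1+m)/(2*m)), by ring⟩, ?_⟩
  set t := (2*n+1+m) / (2*m) with ht
  have h2m : (0:ℤ) < 2*m := by linarith
  have h1 : 0 ≤ (2*n+1+m) % (2*m) := Int.emod_nonneg _ (by linarith)
  have h2 : (2*n+1+m) % (2*m) < 2*m := Int.emod_lt_of_pos _ h2m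
  have h3 : 2*m*t + (2*n+1+m)%(2*m) = 2*n+1+m := Int.mul_ediv_add_emod _ _
  nlinarith [mul_nonneg h1 (by linarith : (0:ℤ) ≤ 2*m - (2*n+1+m)%(2*m))]

lemma step (c n p q : ℤ) (hc : 1 ≤ c) (hF : 2*n^2+2*n+c = p*q) (h1 : 2*c - 1 < p^2)
    (h2 : |p| ≤ |q|) :
    ∃ r : ℤ, |2*r^2+2*r+c| < |2*n^2+2*n+c| ∧ p ∣ (r - n) := by
  have hp0 : 0 < |p| := by
    rcases eq_or_ne p 0 with h | h
    · simp [h] at h1; nlinarith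
    · exact abs_pos.mpr h
  obtain ⟨r, hdvd, hsq⟩ := exists_near |p| n hp0
  refine ⟨r, ?_, (abs_dvd p _).mp hdvd⟩
  have hFr : 0 < 2*r^2+2*r+c := by nlinarith [sq_nonneg (2*r+1)]
  have hFn : 0 < 2*n^2+2*n+c := by nlinarith [sq_nonneg (2*n+1)]
  rw [abs_of_pos hFr, abs_of_pos hFn]
  have hpq : |p| * |q| = 2*n^2+2*n+c := by
    rw [← abs_mul, ← hF]; exact abs_of_pos hFn
  have hpp : p^2 ≤ |p| * |q| := by
    have := mul_le_mul_of_nonneg_left h2 (le_of_lt hp0)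
    nlinarith [sq_abs p]
  nlinarith [sq_abs p]

lemma main_aux (c : ℤ) (hc : 1 ≤ c)
    (H : ∀ n m : ℤ, m ∣ 2*n^2+2*n+c → |m| ≠ 1 → m ≠ 0 → 2*c-1 < m^2) :
    RecursivelyFactorable (fun n : ℤ => 2 * n ^ 2 + 2 * n + c) := by
  intro n p q hF hp hq
  simp only at hF ⊢
  have hFn : 0 < 2*n^2+2*n+c := by nlinarith [sq_nonneg (2*n+1)]
  have hp0 : p ≠ 0 := by rintro rfl; simp at hF; omega
  have hq0 : q ≠ 0 := by rintro rfl; simp at hF; omega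
  have h1 := H n p ⟨q, hF⟩ hp hp0
  have h2 := H n q ⟨p, by rw [hF]; ring⟩ hq hq0
  rcases le_total |p| |q| with h | h
  · obtain ⟨r, hr1, hr2⟩ := step c n p q hc hF h1 h
    exact ⟨r, hr1, Or.inl hr2⟩
  · obtain ⟨r, hr1, hr2⟩ := step c n q p hc (by rw [hF]; ring) h2 h
    exact ⟨r, hr1, Or.inr hr2⟩

lemma not_dvd_of_zmod (k : ℕ) [NeZero k] (c n : ℤ)
    (h : ∀ x : ZMod k, 2*x^2+2*x+(c : ZMod k) ≠ 0) : ¬ ((k:ℤ) ∣ 2*n^2+2*n+c) := by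
  intro hd
  have : ((2*n^2+2*n+c : ℤ) : ZMod k) = 0 :=
    (ZMod.intCast_zmod_eq_zero_iff_dvd _ k).mpr hd
  push_cast at this
  exact h (n : ZMod k) this

/-- For each `c ∈ {1, 2, 3, 7, 19}`, the polynomial `F(n) = 2 * n ^ 2 + 2 * n + c` is
recursively-factorable. -/
theorem stmt_8 :
    ∀ c : ℤ, c ∈ ({1, 2, 3, 7, 19} : Set ℤ) →
      RecursivelyFactorable (fun n : ℤ => 2 * n ^ 2 + 2 * n + c) := by
  intro c hc
  simp only [Set.mem_insert_iff, Set.mem_singleton_iff] at hc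
  have habs : ∀ m : ℤ, |m| ≠ 1 → m ≠ 0 → (m ≤ -2 ∨ 2 ≤ m) := by
    intro m h1 h2
    rcases abs_cases m with ⟨h3, _⟩ | ⟨h3, _⟩ <;> omega
  rcases hc with rfl | rfl | rfl | rfl | rfl
  · refine main_aux 1 (by norm_num) ?_
    intro n m _ h1 h2
    rcases habs m h1 h2 with h | h <;> nlinarith
  · refine main_aux 2 (by norm_num) ?_
    intro n m _ h1 h2
    rcases habs m h1 h2 with h | h <;> nlinarith
  · refine main_aux 3 (by norm_num) ?_
    intro n m hd h1 h2
    have h2d : ¬ ((2:ℤ) ∣ 2*n^2+2*n+3) := not_dvd_of_zmod 2 3 n (by decide)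
    have hm2 : ¬ ((2:ℤ) ∣ m) := fun h => h2d (h.trans hd)
    have : m ≤ -3 ∨ 3 ≤ m := by rcases habs m h1 h2 with h | h <;> omega
    rcases this with h | h <;> nlinarith
  · refine main_aux 7 (by norm_num) ?_
    intro n m hd h1 h2
    have h2d : ¬ ((2:ℤ) ∣ 2*n^2+2*n+7) := not_dvd_of_zmod 2 7 n (by decide)
    have h3d : ¬ ((3:ℤ) ∣ 2*n^2+2*n+7) := not_dvd_of_zmod 3 7 n (by decide)
    have hm2 : ¬ ((2:ℤ) ∣ m) := fun h => h2d (h.trans hd)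
    have hm3 : ¬ ((3:ℤ) ∣ m) := fun h => h3d (h.trans hd)
    have : m ≤ -5 ∨ 5 ≤ m := by rcases habs m h1 h2 with h | h <;> omega
    rcases this with h | h <;> nlinarith
  · refine main_aux 19 (by norm_num) ?_
    intro n m hd h1 h2
    have h2d : ¬ ((2:ℤ) ∣ 2*n^2+2*n+19) := not_dvd_of_zmod 2 19 n (by decide)
    have h3d : ¬ ((3:ℤ) ∣ 2*n^2+2*n+19) := not_dvd_of_zmod 3 19 n (by decide)
    have h5d : ¬ ((5:ℤ) ∣ 2*n^2+2*n+19) := not_dvd_of_zmod 5 19 n (by decide)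
    have hm2 : ¬ ((2:ℤ) ∣ m) := fun h => h2d (h.trans hd)
    have hm3 : ¬ ((3:ℤ) ∣ m) := fun h => h3d (h.trans hd)
    have hm5 : ¬ ((5:ℤ) ∣ m) := fun h => h5d (h.trans hd)
    have : m ≤ -7 ∨ 7 ≤ m := by
      rcases habs m h1 h2 with h | h
      · left; by_contra hx; push_neg at hx; interval_cases m <;> omega
      · right; by_contra hx; push_neg at hx; interval_cases m <;> omega
    rcases this with h | h <;> nlinarith
end

section
/- For each c ∈ {1, 3, 7}, the polynomial F(n) = 4n² + c is recursively-factorable. -/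
lemma key10 (c n p q : ℤ) (hc : c = 1 ∨ c = 3 ∨ c = 7)
    (h : 4 * n ^ 2 + c = p * q) (hp1 : |p| ≠ 1) (hq1 : |q| ≠ 1) (hpq : |p| ≤ |q|) :
    ∃ r : ℤ, |4 * r ^ 2 + c| < |4 * n ^ 2 + c| ∧ p ∣ (r - n) := by
  have hcpos : 0 < c ∧ c ≤ 7 := by omega
  have hF : 0 < 4 * n ^ 2 + c := by nlinarith [sq_nonneg n]
  have hp0 : p ≠ 0 := by rintro rfl; simp at h; omega
  have hq0 : q ≠ 0 := by rintro rfl; simp at h; omega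
  -- p and q are odd
  have hFodd : Odd (4 * n ^ 2 + c) := by
    have he : Even (4 * n ^ 2) := ⟨2 * n ^ 2, by ring⟩
    have ho : Odd c := by rcases hc with rfl | rfl | rfl <;> decide
    exact he.add_odd ho
  have hpodd : Odd p := by
    rcases Int.even_or_odd p with ⟨t, rfl⟩ | ho
    · exfalso
      obtain ⟨s, hs⟩ := hFodd
      have : 4 * n ^ 2 + c = 2 * (t * q) := by rw [h]; ring
      omega
    · exact ho
  have hqodd : Odd q := by
    rcases Int.even_or_odd q with ⟨t, rfl⟩ | ho
    · exfalso
      obtain ⟨s, hs⟩ := hFodd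
      have : 4 * n ^ 2 + c = 2 * (p * t) := by rw [h]; ring
      omega
    · exact ho
  set k := |p| with hk
  have hkodd : Odd k := (by
    rcases abs_choice p with hh | hh
    · rw [hh]; exact hpodd
    · rw [hh]; exact hpodd.neg : Odd |p|)
  have habs : k * |q| = 4 * n ^ 2 + c := by
    rw [← abs_mul, ← h, abs_of_pos hF]
  have hk3 : 3 ≤ k := by
    have h0 : 0 < k := abs_pos.mpr hp0
    obtain ⟨t, ht⟩ := hkodd
    omega
  have hq3 : 3 ≤ |q| := by
    have h0 : 0 < |q| := abs_pos.mpr hq0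
    obtain ⟨t, ht⟩ := (by
    rcases abs_choice q with hh | hh
    · rw [hh]; exact hqodd
    · rw [hh]; exact hqodd.neg : Odd |q|)
    omega
  have hk2 : k ^ 2 ≤ 4 * n ^ 2 + c := by
    calc k ^ 2 = k * k := sq k
    _ ≤ k * |q| := by
        have := abs_nonneg p
        exact mul_le_mul_of_nonneg_left hpq (by omega)
    _ = _ := habs
  set a := |n| with ha
  have ha2 : a ^ 2 = n ^ 2 := sq_abs n
  have ha0 : 0 ≤ a := abs_nonneg n
  have ha1 : 1 ≤ a := by
    by_contra hh
    have : a = 0 := by omega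
    have hn0 : n ^ 2 = 0 := by rw [← ha2, this]; ring
    nlinarith [habs, mul_le_mul hk3 hq3 (by omega) (by omega : (0:ℤ) ≤ k)]
  have hkle : k ≤ 2 * a + 1 := by
    by_contra hh
    push_neg at hh
    nlinarith [hk2, ha2]
  have hkne : k ≠ 2 * a + 1 := by
    intro he
    have ha1' : a = 1 := by nlinarith [hk2, ha2]
    have hk3' : k = 3 := by omega
    have hn2 : n ^ 2 = 1 := by rw [← ha2, ha1']; ring
    rw [hk3', hn2] at habs
    omega
  have hkle' : k ≤ 2 * a - 1 := by
    obtain ⟨t, ht⟩ := hkodd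
    omega
  -- construct r
  have hkpos : 0 < k := by omega
  set m := n % k with hm
  have hm0 : 0 ≤ m := Int.emod_nonneg n (by omega)
  have hmk : m < k := Int.emod_lt_of_pos n hkpos
  have hdvd : k ∣ m - n := by
    have : n % k - n = -(k * (n / k)) := by
      have := Int.emod_add_mul_ediv n k
      linarith
    rw [hm, this]
    exact (dvd_neg).mpr (Dvd.intro _ rfl)
  set r : ℤ := if 2 * m < k then m else m - k with hr
  have hrabs : |r| ≤ a - 1 := by
    obtain ⟨t, ht⟩ := hkodd
    rw [hr]
    split_ifs with hsplit
    · rw [abs_of_nonneg hm0]; omega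
    · rw [abs_of_nonpos (by omega)]; omega
  refine ⟨r, ?_, ?_⟩
  · have hr2 : r ^ 2 < n ^ 2 := by
      have h1 : |r| ^ 2 = r ^ 2 := sq_abs r
      have h2 : (0:ℤ) ≤ |r| := abs_nonneg r
      nlinarith
    have hFr : 0 < 4 * r ^ 2 + c := by nlinarith [sq_nonneg r]
    rw [abs_of_pos hFr, abs_of_pos hF]
    linarith
  · have hkr : k ∣ r - n := by
      rw [hr]; split_ifs
      · exact hdvd
      · have : m - k - n = (m - n) + (-1) * k := by ring
        rw [this]
        exact dvd_add hdvd ⟨-1, by ring⟩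
    exact (abs_dvd p (r - n)).mp hkr

/-- For each `c ∈ {1, 3, 7}`, the polynomial `F(n) = 4 * n ^ 2 + c` is
recursively-factorable. -/
theorem stmt_10 :
    ∀ c : ℤ, c ∈ ({1, 3, 7} : Set ℤ) →
      RecursivelyFactorable (fun n : ℤ => 4 * n ^ 2 + c) := by
  intro c hc n p q h hp hq
  simp only [Set.mem_insert_iff, Set.mem_singleton_iff] at hc
  simp only at h ⊢
  rcases le_total |p| |q| with hle | hle
  · obtain ⟨r, h1, h2⟩ := key10 c n p q hc h hp hq hle
    exact ⟨r, h1, Or.inl h2⟩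
  · obtain ⟨r, h1, h2⟩ := key10 c n q p hc (by rw [h]; ring) hq hp hle
    exact ⟨r, h1, Or.inr h2⟩
end

section
/- For each c ∈ {2, 3, 5}, the polynomial F(n) = 4n² + 4n + c is recursively-factorable. -/
lemma key_s11 (c n p q : ℤ) (hc : c = 2 ∨ c = 3 ∨ c = 5)
    (h : 4*n^2+4*n+c = p*q) (hp : 2 ≤ |p|) (hpq : |p| ≤ |q|) :
    ∃ r : ℤ, |4*r^2+4*r+c| < |4*n^2+4*n+c| ∧ p ∣ (r - n) := by
  have hc2 : 2 ≤ c := by rcases hc with rfl|rfl|rfl <;> norm_num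
  have hc4 : c ≤ 5 := by rcases hc with rfl|rfl|rfl <;> norm_num
  have hFn : 0 < 4*n^2+4*n+c := by nlinarith [sq_nonneg (2*n+1)]
  have hFn' : 4*n^2+4*n+c = |p| * |q| := by
    rw [← abs_mul, ← h, abs_of_pos hFn]
  have hmdvd : |p| ∣ 4*n^2+4*n+c := (abs_dvd p _).mpr ⟨q, h⟩
  obtain ⟨k, hk1, hk2⟩ : ∃ k : ℤ, -|p| ≤ 2*n+1-2*k*|p| ∧ 2*n+1-2*k*|p| < |p| := by
    refine ⟨(2*n+1+|p|)/(2*|p|), ?_, ?_⟩ <;>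
    · have h1 := Int.mul_ediv_add_emod (2*n+1+|p|) (2*|p|)
      have h2 := Int.emod_nonneg (2*n+1+|p|) (show 2*|p| ≠ 0 by omega)
      have h3 := Int.emod_lt_of_pos (2*n+1+|p|) (show 0 < 2*|p| by omega)
      nlinarith [h1, h2, h3]
  set r := n - k*|p| with hr
  have hdvd : p ∣ (r - n) := by
    have hpm : p ∣ |p| := (dvd_abs p p).mpr dvd_rfl
    have he : r - n = (-k) * |p| := by rw [hr]; ring
    rw [he]; exact Dvd.dvd.mul_left hpm (-k)
  have hts : 2*r+1 = 2*n+1-2*k*|p| := by rw [hr]; ring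
  have hFr : 0 < 4*r^2+4*r+c := by nlinarith [sq_nonneg (2*r+1)]
  refine ⟨r, ?_, hdvd⟩
  rw [abs_of_pos hFr, abs_of_pos hFn, hFn']
  have hgoal : 4*r^2+4*r+c = (2*r+1)^2 + (c-1) := by ring
  rw [hgoal]
  rcases eq_or_lt_of_le hk1 with ht | ht
  · -- 2*r+1 = -|p|
    have hs2 : 2*r+1 = -|p| := by omega
    have hsq : (2*r+1)^2 = |p|^2 := by rw [hs2]; ring
    have hmodd : Odd |p| := by
      have ho : Odd (-(2*r+1)) := ⟨-r-1, by ring⟩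
      rw [hs2] at ho; simpa using ho
    obtain ⟨w, hw⟩ := hmodd
    rcases (by omega : |q| = |p| ∨ |p|+1 ≤ |q|) with hQ | hQ
    · exfalso
      have heq : (2*r+1)^2 = (2*n+1)^2 + (c-1) := by
        have h5 := hFn'; rw [hQ] at h5
        linear_combination hsq - h5
      have h8 := congrArg (fun z : ℤ => (z : ZMod 8)) heq
      push_cast at h8
      rcases hc with rfl|rfl|rfl <;> norm_num at h8
      · exact (by decide : ∀ x y : ZMod 8, (2*x+1)^2 ≠ (2*y+1)^2 + 1) _ _ h8
      · exact (by decide : ∀ x y : ZMod 8, (2*x+1)^2 ≠ (2*y+1)^2 + 2) _ _ h8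
      · exact (by decide : ∀ x y : ZMod 8, (2*x+1)^2 ≠ (2*y+1)^2 + 4) _ _ h8
    · have hml : |p| * (|p|+1) ≤ |p| * |q| :=
        mul_le_mul_of_nonneg_left hQ (abs_nonneg p)
      have hm3' : 3 ≤ |p| := by omega
      rcases hc with rfl|rfl|rfl
      · rw [hsq]; nlinarith
      · rw [hsq]; nlinarith
      · have hm3 : |p| ≠ 3 := by
          intro hm
          have h3 : (3:ℤ) ∣ (2*n+1)^2 + 4 := by
            have he : (4*n^2+4*n+5 : ℤ) = (2*n+1)^2+4 := by ring
            rw [← he, ← hm]; exact hmdvd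
          have h4 := (ZMod.intCast_zmod_eq_zero_iff_dvd _ 3).mpr h3
          push_cast at h4
          exact (by decide : ∀ x : ZMod 3, (2*x+1)^2+4 ≠ 0) _ h4
        have hm5 : 5 ≤ |p| := by omega
        rw [hsq]; nlinarith
  · -- -|p| < 2*r+1 < |p|
    have hb1 : -(|p|-1) ≤ 2*r+1 := by omega
    have hb2 : 2*r+1 ≤ |p|-1 := by omega
    rcases lt_or_ge 2 |p| with hm3 | hm2
    · nlinarith [mul_le_mul_of_nonneg_left hpq (abs_nonneg p), sq_nonneg (2*r+1)]
    · have hm : |p| = 2 := by omega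
      have h2d : (2:ℤ) ∣ 4*n^2+4*n+c := by rw [← hm]; exact hmdvd
      rcases hc with rfl|rfl|rfl
      · have ht1 : 2*r+1 = -1 ∨ 2*r+1 = 1 := by omega
        have hsq : (2*r+1)^2 = 1 := by rcases ht1 with h'|h' <;> rw [h'] <;> ring
        rw [hsq]; nlinarith
      · exfalso; obtain ⟨u, hu⟩ := h2d
        have : (3:ℤ) = 2*(u - 2*n^2 - 2*n) := by linarith
        omega
      · exfalso; obtain ⟨u, hu⟩ := h2d
        have : (5:ℤ) = 2*(u - 2*n^2 - 2*n) := by linarith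
        omega

/-- For each `c ∈ {2, 3, 5}`, the polynomial `F(n) = 4 * n ^ 2 + 4 * n + c` is
recursively-factorable. -/
theorem stmt_11 :
    ∀ c : ℤ, c ∈ ({2, 3, 5} : Set ℤ) →
      RecursivelyFactorable (fun n : ℤ => 4 * n ^ 2 + 4 * n + c) := by
  intro c hc n p q h hp hq
  simp only [Set.mem_insert_iff, Set.mem_singleton_iff] at hc
  simp only [] at h ⊢
  have hc2 : 2 ≤ c := by rcases hc with rfl|rfl|rfl <;> norm_num
  have hFn : 0 < 4*n^2+4*n+c := by nlinarith [sq_nonneg (2*n+1)]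
  have hp0 : p ≠ 0 := by rintro rfl; rw [zero_mul] at h; omega
  have hq0 : q ≠ 0 := by rintro rfl; rw [mul_zero] at h; omega
  have hp2 : 2 ≤ |p| := by
    have := abs_nonneg p
    have : |p| ≠ 0 := by simpa using hp0
    omega
  have hq2 : 2 ≤ |q| := by
    have := abs_nonneg q
    have : |q| ≠ 0 := by simpa using hq0
    omega
  rcases le_total |p| |q| with hle | hle
  · obtain ⟨r, h1, h2⟩ := key_s11 c n p q hc h hp2 hle
    exact ⟨r, h1, Or.inl h2⟩
  · obtain ⟨r, h1, h2⟩ := key_s11 c n q p hc (by rw [h]; ring) hq2 hle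
    exact ⟨r, h1, Or.inr h2⟩
end
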